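/- Let X be a shift space over A, σ : A* → B* an injective strongly left proper morphism with first letter ℓ, Y the image of X under σ, and u a nonempty word of L(Y) in which ℓ occurs, with unique decomposition u = sσ(v)p (v ∈ L(X) the antecedent of u, s a proper suffix of σ(a) and p a nonempty prefix of σ(b) for some (a,b) ∈ E_X(v)). Then E_Y(u) = {(a',b') ∈ B×B : there exists (a,b) ∈ E_X(v) such that a's is a suffix of σ(a) and pb' is a prefix of σ(b)ℓ}. -/
import Mathlib


open Classical

/-! ### Basic shift-space definitions -/

/-- The shift map `S` on bi-infinite words over `A`. -/
def shiftMap (A : Type*) : (ℤ → A) → (ℤ → A) := fun x n => x (n + 1)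

/-- The product topology on `ℤ → A`, each copy of `A` carrying the discrete topology. -/
def seqTop (A : Type*) : TopologicalSpace (ℤ → A) :=
  @Pi.topologicalSpace ℤ (fun _ => A) (fun _ => ⊥)

/-- A shift space: a closed, shift-invariant subset of `A^ℤ`. -/
def IsShiftSpace {A : Type*} (X : Set (ℤ → A)) : Prop :=
  @IsClosed _ (seqTop A) X ∧ shiftMap A '' X = X

/-- A minimal shift space: the only closed shift-invariant subsets are `∅` and `X`. -/
def IsMinimalShift {A : Type*} (X : Set (ℤ → A)) : Prop :=
  IsShiftSpace X ∧
    ∀ Y : Set (ℤ → A), Y ⊆ X → @IsClosed _ (seqTop A) Y → shiftMap A '' Y = Y →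
      Y = ∅ ∨ Y = X

/-- The finite word `w` occurs as a factor of the bi-infinite word `x`. -/
def occursIn {A : Type*} (w : List A) (x : ℤ → A) : Prop :=
  ∃ i : ℤ, w = List.ofFn (fun k : Fin w.length => x (i + (k.val : ℤ)))

/-- The language of `X`: all finite factors of elements of `X`. -/
def language {A : Type*} (X : Set (ℤ → A)) : Set (List A) :=
  {w | ∃ x ∈ X, occursIn w x}

/-- The factor complexity `p_X(n)`. -/
noncomputable def complexity {A : Type*} (X : Set (ℤ → A)) (n : ℕ) : ℕ :=
  {w ∈ language X | w.length = n}.ncard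

/-- Left extensions `E⁻(w)` of `w` in `X`. -/
def extLeft {A : Type*} (X : Set (ℤ → A)) (w : List A) : Set A :=
  {a | (a :: w) ∈ language X}

/-- Right extensions `E⁺(w)` of `w` in `X`. -/
def extRight {A : Type*} (X : Set (ℤ → A)) (w : List A) : Set A :=
  {b | (w ++ [b]) ∈ language X}

/-- Bi-extensions `E(w)` of `w` in `X`. -/
def extBoth {A : Type*} (X : Set (ℤ → A)) (w : List A) : Set (A × A) :=
  {p | (p.1 :: (w ++ [p.2])) ∈ language X}

def LeftSpecial {A : Type*} (X : Set (ℤ → A)) (w : List A) : Prop :=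
  2 ≤ (extLeft X w).ncard

def RightSpecial {A : Type*} (X : Set (ℤ → A)) (w : List A) : Prop :=
  2 ≤ (extRight X w).ncard

def Bispecial {A : Type*} (X : Set (ℤ → A)) (w : List A) : Prop :=
  LeftSpecial X w ∧ RightSpecial X w

/-! ### Extension graphs -/

/-- The bipartite graph on `A ⊕ A` (left copy ⊕ right copy) whose edges are given
by a set `E` of pairs. -/
def pairGraph {A : Type*} (E : Set (A × A)) : SimpleGraph (A ⊕ A) :=
  SimpleGraph.fromRel (fun u v => ∃ a b, u = Sum.inl a ∧ v = Sum.inr b ∧ (a, b) ∈ E)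

/-- The vertices of `A ⊕ A` incident to some edge of `E`. -/
def pairSupport {A : Type*} (E : Set (A × A)) : Set (A ⊕ A) :=
  Sum.inl '' {a | ∃ b, (a, b) ∈ E} ∪ Sum.inr '' {b | ∃ a, (a, b) ∈ E}

/-- The vertex set of the extension graph of `w`: `E⁻(w) ⊔ E⁺(w)`. -/
def extVertices {A : Type*} (X : Set (ℤ → A)) (w : List A) : Set (A ⊕ A) :=
  Sum.inl '' extLeft X w ∪ Sum.inr '' extRight X w

/-- `w` is dendric in `X`: its extension graph is a tree. -/
def IsDendric {A : Type*} (X : Set (ℤ → A)) (w : List A) : Prop :=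
  ((pairGraph (extBoth X w)).induce (extVertices X w)).IsTree

/-- A dendric shift: a shift space all of whose factors are dendric. -/
def IsDendricShift {A : Type*} (X : Set (ℤ → A)) : Prop :=
  IsShiftSpace X ∧ ∀ w ∈ language X, IsDendric X w

/-- The graph with edge set `E` and vertices those incident to an edge, is a tree. -/
def restrictedIsTree {A : Type*} (E : Set (A × A)) : Prop :=
  ((pairGraph E).induce (pairSupport E)).IsTree

/-- An ordinary bispecial factor. -/
def Ordinary {A : Type*} (X : Set (ℤ → A)) (w : List A) : Prop :=
  Bispecial X w ∧ ∃ p ∈ extBoth X w, ∀ q ∈ extBoth X w, q.1 = p.1 ∨ q.2 = p.2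

/-- An Arnoux-Rauzy shift over `A`. -/
def IsArnouxRauzy {A : Type*} (X : Set (ℤ → A)) : Prop :=
  IsMinimalShift X ∧ ∀ n : ℕ, 1 ≤ n →
    (∃! u : List A, u ∈ language X ∧ u.length = n ∧ LeftSpecial X u) ∧
    (∃! v : List A, v ∈ language X ∧ v.length = n ∧ RightSpecial X v) ∧
    (∀ u ∈ language X, u.length = n → LeftSpecial X u → extLeft X u = Set.univ) ∧
    (∀ v ∈ language X, v.length = n → RightSpecial X v → extRight X v = Set.univ)

/-! ### Morphisms -/

/-- Apply a morphism (given by its images of letters) to a finite word. -/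
def applyWord {A B : Type*} (σ : A → List B) (w : List A) : List B :=
  (w.map σ).flatten

def NonErasing {A B : Type*} (σ : A → List B) : Prop := ∀ a, σ a ≠ []

/-- `σ` is strongly left proper with first letter `ℓ`: every `σ a` starts with `ℓ`
and `ℓ` occurs exactly once in `σ a`. -/
def StronglyLeftProper {A B : Type*} (σ : A → List B) (ℓ : B) : Prop :=
  ∀ a, ∃ w : List B, σ a = ℓ :: w ∧ ℓ ∉ w

/-- Apply a (non-erasing) morphism to a bi-infinite word, anchored so that
`σ (x 0)` starts at index `0`. -/
noncomputable def applyPoint {A B : Type*} [Nonempty B] (σ : A → List B) (x : ℤ → A) :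
    ℤ → B := fun m =>
  letI : Inhabited B := Classical.inhabited_of_nonempty inferInstance
  if 0 ≤ m then
    (applyWord σ (List.ofFn (fun k : Fin (m.toNat + 1) => x (k.val : ℤ)))).getD m.toNat default
  else
    let K := (-m).toNat
    let L := applyWord σ (List.ofFn (fun k : Fin K => x ((k.val : ℤ) - (K : ℤ))))
    L.getD ((L.length : ℤ) + m).toNat default

/-- The image of a shift space `X` under the morphism `σ`:
`Y = {S^k σ(x) : x ∈ X, 0 ≤ k < |σ(x₀)|}`. -/
def shiftImage {A B : Type*} [Nonempty B] (σ : A → List B) (X : Set (ℤ → A)) :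
    Set (ℤ → B) :=
  {y | ∃ x ∈ X, ∃ k : ℕ, k < (σ (x 0)).length ∧ y = (shiftMap B)^[k] (applyPoint σ x)}

/-- `u` is an extended image of `v` under the injective strongly left proper
morphism `σ` (with first letter `ℓ`). -/
def ExtendedImage {A B : Type*} [Nonempty B] (σ : A → List B) (ℓ : B)
    (X : Set (ℤ → A)) (v : List A) (u : List B) : Prop :=
  u ∈ language (shiftImage σ X) ∧ u ≠ [] ∧ ℓ ∈ u ∧ v ∈ language X ∧
    ∃ (s p : List B) (a b : A), u = s ++ applyWord σ v ++ p ∧ (a, b) ∈ extBoth X v ∧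
      s <:+ σ a ∧ s ≠ σ a ∧ p ≠ [] ∧ p <+: σ b

/-- `σ` is dendric preserving for the factor `v` of `X`: every bispecial extended
image of `v` is dendric in the image shift. -/
def DendricPreservingFor {A B : Type*} [Nonempty B] (σ : A → List B) (ℓ : B)
    (X : Set (ℤ → A)) (v : List A) : Prop :=
  ∀ u, ExtendedImage σ ℓ X v u → Bispecial (shiftImage σ X) u →
    IsDendric (shiftImage σ X) u

/-! ### Longest common prefixes and suffixes -/

/-- Longest common prefix of two words. -/
def lcp {B : Type*} [DecidableEq B] : List B → List B → List B
  | a :: l, b :: m => if a = b then a :: lcp l m else []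
  | _, _ => []

/-- Longest common suffix of two words. -/
def lcs {B : Type*} [DecidableEq B] (l m : List B) : List B :=
  (lcp l.reverse m.reverse).reverse

/-- `T⁻(σ)`: longest common suffixes of images of distinct letters. -/
def Tminus {A B : Type*} [DecidableEq B] (σ : A → List B) : Set (List B) :=
  {s | ∃ a₁ a₂ : A, a₁ ≠ a₂ ∧ s = lcs (σ a₁) (σ a₂)}

/-- `T⁺(σ)`: longest common prefixes of images of distinct letters. -/
def Tplus {A B : Type*} [DecidableEq B] (σ : A → List B) : Set (List B) :=
  {p | ∃ b₁ b₂ : A, b₁ ≠ b₂ ∧ p = lcp (σ b₁) (σ b₂)}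

/-- `T⁻_v(σ)`. -/
def TminusV {A B : Type*} [DecidableEq B] (σ : A → List B) (X : Set (ℤ → A))
    (v : List A) : Set (List B) :=
  {s | ∃ a₁ a₂ : A, a₁ ≠ a₂ ∧ a₁ ∈ extLeft X v ∧ a₂ ∈ extLeft X v ∧
    s = lcs (σ a₁) (σ a₂)}

/-- `T⁺_v(σ)`. -/
def TplusV {A B : Type*} [DecidableEq B] (σ : A → List B) (X : Set (ℤ → A))
    (v : List A) : Set (List B) :=
  {p | ∃ b₁ b₂ : A, b₁ ≠ b₂ ∧ b₁ ∈ extRight X v ∧ b₂ ∈ extRight X v ∧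
    p = lcp (σ b₁) (σ b₂)}

/-- `E⁻_{X,s}(v)`. -/
def extLeftS {A B : Type*} (σ : A → List B) (X : Set (ℤ → A)) (v : List A)
    (s : List B) : Set A :=
  {a ∈ extLeft X v | s <:+ σ a}

/-- `E⁺_{X,p}(v)`. -/
def extRightP {A B : Type*} (σ : A → List B) (ℓ : B) (X : Set (ℤ → A)) (v : List A)
    (p : List B) : Set A :=
  {b ∈ extRight X v | p <+: (σ b ++ [ℓ])}

/-- `E_{X,s,p}(v)`. -/
def extBothSP {A B : Type*} (σ : A → List B) (ℓ : B) (X : Set (ℤ → A)) (v : List A)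
    (s p : List B) : Set (A × A) :=
  {q ∈ extBoth X v | q.1 ∈ extLeftS σ X v s ∧ q.2 ∈ extRightP σ ℓ X v p}

/-- `σ` is left-invariant: `T⁻(σ)` is a singleton. -/
def LeftInvariant {A B : Type*} [DecidableEq B] (σ : A → List B) : Prop :=
  ∃ s, Tminus σ = {s}

/-- `σ` is right-invariant: `T⁺(σ)` is a singleton. -/
def RightInvariant {A B : Type*} [DecidableEq B] (σ : A → List B) : Prop :=
  ∃ p, Tplus σ = {p}

/-! ### The sets `C⁻` and `C⁺` -/

/-- Edges of `E` not incident to the left vertex `a`. -/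
def delLeft {A : Type*} (E : Set (A × A)) (a : A) : Set (A × A) := {p ∈ E | p.1 ≠ a}

/-- Edges of `E` not incident to the right vertex `b`. -/
def delRight {A : Type*} (E : Set (A × A)) (b : A) : Set (A × A) := {p ∈ E | p.2 ≠ b}

/-- `C⁻_X(v)`: letters `a` whose deletion (as a left vertex, removing resulting
isolated vertices) disconnects the extension graph of `v`. -/
def Cminus {A : Type*} (X : Set (ℤ → A)) (v : List A) : Set A :=
  {a | ¬ ((pairGraph (delLeft (extBoth X v) a)).induce
      (pairSupport (delLeft (extBoth X v) a))).Preconnected}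

/-- `C⁺_X(v)`. -/
def Cplus {A : Type*} (X : Set (ℤ → A)) (v : List A) : Set A :=
  {b | ¬ ((pairGraph (delRight (extBoth X v) b)).induce
      (pairSupport (delRight (extBoth X v) b))).Preconnected}

/-- `C⁻(X) = ⋃_{v ∈ L(X)} C⁻_X(v)`. -/
def CminusShift {A : Type*} (X : Set (ℤ → A)) : Set A :=
  {a | ∃ v ∈ language X, a ∈ Cminus X v}

/-- `C⁺(X)`. -/
def CplusShift {A : Type*} (X : Set (ℤ → A)) : Set A :=
  {b | ∃ v ∈ language X, b ∈ Cplus X v}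

/-! ### The ternary alphabet and the set `S₃` -/

/-- `α : 1↦1, 2↦12, 3↦13` (letters `1,2,3` are `0,1,2 : Fin 3`). -/
def mAlpha : Fin 3 → List (Fin 3) := ![[0], [0, 1], [0, 2]]

/-- `β : 1↦1, 2↦12, 3↦132`. -/
def mBeta : Fin 3 → List (Fin 3) := ![[0], [0, 1], [0, 2, 1]]

/-- `γ : 1↦1, 2↦12, 3↦123`. -/
def mGamma : Fin 3 → List (Fin 3) := ![[0], [0, 1], [0, 1, 2]]

/-- `δ⁽ᵏ⁾ : 1↦1, 2↦123^k, 3↦123^{k+1}`. -/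
def mDelta (k : ℕ) : Fin 3 → List (Fin 3) :=
  ![[0], [0, 1] ++ List.replicate k 2, [0, 1] ++ List.replicate (k + 1) 2]

/-- `ζ⁽ᵏ⁾ : 1↦13^k, 2↦12, 3↦13^{k+1}`. -/
def mZeta (k : ℕ) : Fin 3 → List (Fin 3) :=
  ![0 :: List.replicate k 2, [0, 1], 0 :: List.replicate (k + 1) 2]

/-- `η : 1↦13, 2↦12, 3↦123`. -/
def mEta : Fin 3 → List (Fin 3) := ![[0, 2], [0, 1], [0, 1, 2]]

/-- The set `S₃` of morphisms. -/
def S3Set : Set (Fin 3 → List (Fin 3)) :=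
  {mAlpha, mBeta, mGamma, mEta} ∪ {σ | ∃ k, 1 ≤ k ∧ (σ = mDelta k ∨ σ = mZeta k)}

/-- `S_LI = {α, γ}`. -/
def SLISet : Set (Fin 3 → List (Fin 3)) := {mAlpha, mGamma}

/-- `S_RI = {α, β}`. -/
def SRISet : Set (Fin 3 → List (Fin 3)) := {mAlpha, mBeta}

/-- The morphism induced by a permutation of the alphabet. -/
def permMorph (π : Equiv.Perm (Fin 3)) : Fin 3 → List (Fin 3) := fun a => [π a]

/-- Composition of morphisms (as substitutions). -/
def compMorph {A B C : Type*} (τ : B → List C) (σ : A → List B) : A → List C :=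
  fun a => applyWord τ (σ a)

/-- `Σ₃ T Σ₃` for a set `T` of morphisms of `A₃*`. -/
def SigmaSSigma (T : Set (Fin 3 → List (Fin 3))) : Set (Fin 3 → List (Fin 3)) :=
  {σ | ∃ (π π' : Equiv.Perm (Fin 3)) (τ : Fin 3 → List (Fin 3)), τ ∈ T ∧
    σ = compMorph (permMorph π) (compMorph τ (permMorph π'))}

/-! ### S-adic representations -/

/-- `prodMorph σ m n = σ_m ∘ σ_{m+1} ∘ ⋯ ∘ σ_{m+n-1}` (as substitutions). -/
def prodMorph {A : Type*} (σ : ℕ → A → List A) : ℕ → ℕ → A → List A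
  | _, 0 => fun a => [a]
  | m, n + 1 => compMorph (σ m) (prodMorph σ (m + 1) n)

/-- The language of level `n` of a directive sequence (0-indexed: `levelLang σ 0`
is the language of level 1 of the paper). -/
def levelLang {A : Type*} (σ : ℕ → A → List A) (n : ℕ) : Set (List A) :=
  {w | ∃ (m : ℕ) (a : A), 0 < m ∧ w <:+: prodMorph σ n m a}

/-- The shift space `X_σ^{(n+1)}` generated by the language of level `n+1`. -/
def levelShift {A : Type*} (σ : ℕ → A → List A) (n : ℕ) : Set (ℤ → A) :=
  {x | ∀ w, occursIn w x → w ∈ levelLang σ n}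

/-- The growth condition `max_a |σ_{[1,n)}(a)| → ∞`. -/
def SAdicGrowth {A : Type*} [Fintype A] (σ : ℕ → A → List A) : Prop :=
  Filter.Tendsto (fun n => Finset.univ.sup fun a : A => (prodMorph σ 0 n a).length)
    Filter.atTop Filter.atTop

/-- `σ` is an S-adic representation of `X`. -/
def IsSAdicRep {A : Type*} [Fintype A] (σ : ℕ → A → List A) (X : Set (ℤ → A)) : Prop :=
  SAdicGrowth σ ∧ X = levelShift σ 0

/-- Primitivity of a directive sequence. -/
def PrimitiveSeq {A : Type*} (σ : ℕ → A → List A) : Prop :=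
  ∀ n, ∃ m, 0 < m ∧ ∀ a b : A, a ∈ prodMorph σ n m b

/-- `X` is a shift space over `A₃`: every letter belongs to the language. -/
def ShiftOver3 (X : Set (ℤ → Fin 3)) : Prop := ∀ a : Fin 3, [a] ∈ language X

/-- A minimal dendric shift over `A₃`. -/
def MinimalDendric3 (X : Set (ℤ → Fin 3)) : Prop :=
  IsMinimalShift X ∧ (∀ w ∈ language X, IsDendric X w) ∧ ShiftOver3 X

/-! ### Induced transformations -/

/-- `I` is recurrent for `T`. -/
def RecurrentSet {Ω : Type*} (T : Ω → Ω) (I : Set Ω) : Prop :=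
  ∀ x ∈ I, ∃ n, 0 < n ∧ T^[n] x ∈ I

/-- First return time of `x` to `I` under `T`. -/
noncomputable def returnTime {Ω : Type*} (T : Ω → Ω) (I : Set Ω) (x : Ω) : ℕ :=
  sInf {n | 0 < n ∧ T^[n] x ∈ I}

/-- The transformation induced by `T` on `I`. -/
noncomputable def inducedMap {Ω : Type*} (T : Ω → Ω) (I : Set Ω) : Ω → Ω :=
  fun x => T^[returnTime T I x] x

/-- The Arnoux-Rauzy morphism `α_a : a ↦ a, b ↦ ab (b ≠ a)`. -/
def arAlpha {A : Type*} [DecidableEq A] (a : A) : A → List A :=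
  fun b => if b = a then [a] else [a, b]

/-- The Arnoux-Rauzy morphism `ᾱ_a : a ↦ a, b ↦ ba (b ≠ a)`. -/
def arAlphaBar {A : Type*} [DecidableEq A] (a : A) : A → List A :=
  fun b => if b = a then [a] else [b, a]

section Helpers
variable {A B : Type*}

lemma applyWord_nil (σ : A → List B) : applyWord σ [] = [] := rfl

lemma applyWord_cons (σ : A → List B) (a : A) (l : List A) :
    applyWord σ (a :: l) = σ a ++ applyWord σ l := by
  simp [applyWord]

lemma applyWord_append (σ : A → List B) (l m : List A) :
    applyWord σ (l ++ m) = applyWord σ l ++ applyWord σ m := by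
  simp [applyWord]

lemma applyWord_singleton (σ : A → List B) (a : A) : applyWord σ [a] = σ a := by
  simp [applyWord]

lemma length_le_applyWord (σ : A → List B) (h : ∀ a, σ a ≠ []) (l : List A) :
    l.length ≤ (applyWord σ l).length := by
  induction l with
  | nil => simp [applyWord]
  | cons a l ih =>
    rw [applyWord_cons, List.length_append, List.length_cons]
    have := List.length_pos_iff.mpr (h a)
    omega

lemma slp_ne_nil {σ : A → List B} {ℓ : B} (hslp : StronglyLeftProper σ ℓ) (a : A) :
    σ a ≠ [] := by
  obtain ⟨w, hw, -⟩ := hslp a; simp [hw]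

lemma applyWord_head {σ : A → List B} {ℓ : B} (hslp : StronglyLeftProper σ ℓ)
    {z : List A} (hz : z ≠ []) : ∃ t, applyWord σ z = ℓ :: t := by
  cases z with
  | nil => exact absurd rfl hz
  | cons a z =>
    obtain ⟨w, hw, -⟩ := hslp a
    exact ⟨w ++ applyWord σ z, by rw [applyWord_cons, hw]; rfl⟩

lemma occursIn_iff {w : List A} {x : ℤ → A} :
    occursIn w x ↔ ∃ i : ℤ, ∀ j : ℕ, (hj : j < w.length) → w[j] = x (i + j) := by
  constructor
  · rintro ⟨i, hi⟩
    refine ⟨i, fun j hj => ?_⟩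
    rw [List.getElem_of_eq hi hj, List.getElem_ofFn]
  · rintro ⟨i, hi⟩
    refine ⟨i, List.ext_getElem (by simp) fun j h1 h2 => ?_⟩
    rw [List.getElem_ofFn]
    exact hi j h1

lemma occursIn_infix {w w' : List A} {x : ℤ → A} (h' : w' <:+: w) (h : occursIn w x) :
    occursIn w' x := by
  rw [occursIn_iff] at h ⊢
  obtain ⟨i, hi⟩ := h
  obtain ⟨t, r, htr⟩ := h'
  rw [List.append_assoc] at htr
  refine ⟨i + t.length, fun j hj => ?_⟩
  have hlen : t.length + j < w.length := by rw [← htr]; simp; omega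
  have e1 : w[t.length + j]'hlen = w'[j]'hj := by
    rw [List.getElem_of_eq htr.symm hlen, List.getElem_append_right (by omega)]
    simp only [Nat.add_sub_cancel_left]
    rw [List.getElem_append_left hj]
  rw [← e1, hi (t.length + j) hlen]
  congr 1
  push_cast
  ring

lemma language_infix {X : Set (ℤ → A)} {w w' : List A} (h : w ∈ language X)
    (h' : w' <:+: w) : w' ∈ language X := by
  obtain ⟨x, hx, ho⟩ := h; exact ⟨x, hx, occursIn_infix h' ho⟩

lemma language_ext_right {X : Set (ℤ → A)} {w : List A} (h : w ∈ language X) :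
    ∃ b, w ++ [b] ∈ language X := by
  obtain ⟨x, hx, ho⟩ := h
  rw [occursIn_iff] at ho
  obtain ⟨i, hi⟩ := ho
  refine ⟨x (i + w.length), x, hx, occursIn_iff.mpr ⟨i, fun j hj => ?_⟩⟩
  have hj' : j < w.length + 1 := by simpa using hj
  rcases lt_or_ge j w.length with h1 | h1
  · rw [List.getElem_append_left h1]
    exact hi j h1
  · have hje : j = w.length := by omega
    subst hje
    rw [List.getElem_append_right (le_refl _)]
    simp

lemma shiftMap_iterate (x : ℤ → A) (k : ℕ) (m : ℤ) :
    (shiftMap A)^[k] x m = x (m + k) := by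
  induction k generalizing x with
  | zero => simp
  | succ k ih =>
    rw [Function.iterate_succ_apply, ih]
    show x (m + k + 1) = _
    congr 1
    push_cast
    ring

lemma shift_mem_forward {X : Set (ℤ → A)} (hX : IsShiftSpace X) {x : ℤ → A}
    (hx : x ∈ X) (n : ℕ) : (shiftMap A)^[n] x ∈ X := by
  induction n with
  | zero => simpa
  | succ n ih =>
    rw [Function.iterate_succ_apply']
    rw [← hX.2]
    exact ⟨_, ih, rfl⟩

lemma shift_mem_backward {X : Set (ℤ → A)} (hX : IsShiftSpace X) {x : ℤ → A}
    (hx : x ∈ X) (n : ℕ) : ∃ x' ∈ X, (shiftMap A)^[n] x' = x := by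
  induction n generalizing x with
  | zero => exact ⟨x, hx, rfl⟩
  | succ n ih =>
    have hx' : x ∈ shiftMap A '' X := by rw [hX.2]; exact hx
    obtain ⟨x₁, hx₁, hx₁e⟩ := hx'
    obtain ⟨x₂, hx₂, hx₂e⟩ := ih hx₁
    exact ⟨x₂, hx₂, by rw [Function.iterate_succ_apply', hx₂e, hx₁e]⟩

lemma shift_exists {X : Set (ℤ → A)} (hX : IsShiftSpace X) {x : ℤ → A} (hx : x ∈ X)
    (i : ℤ) : ∃ x' ∈ X, ∀ m, x' m = x (m + i) := by
  rcases le_or_gt 0 i with h | h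
  · refine ⟨(shiftMap A)^[i.toNat] x, shift_mem_forward hX hx _, fun m => ?_⟩
    rw [shiftMap_iterate]
    congr 1
    omega
  · obtain ⟨x', hx', he⟩ := shift_mem_backward hX hx (-i).toNat
    refine ⟨x', hx', fun m => ?_⟩
    have := shiftMap_iterate x' (-i).toNat (m + i)
    rw [he] at this
    rw [this]
    congr 1
    omega

end Helpers

section Part2
variable {A B : Type*}

def ofInt (x : ℤ → A) (a : ℤ) (n : ℕ) : List A := List.ofFn (fun k : Fin n => x (a + k))

@[simp] lemma length_ofInt (x : ℤ → A) (a : ℤ) (n : ℕ) : (ofInt x a n).length = n := by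
  simp [ofInt]

lemma getElem_ofInt (x : ℤ → A) (a : ℤ) (n : ℕ) (j : ℕ) (hj : j < (ofInt x a n).length) :
    (ofInt x a n)[j] = x (a + j) := by
  simp [ofInt]

lemma ofInt_append (x : ℤ → A) (a : ℤ) (n m : ℕ) :
    ofInt x a (n + m) = ofInt x a n ++ ofInt x (a + n) m := by
  refine List.ext_getElem (by simp) fun j h1 h2 => ?_
  rw [getElem_ofInt]
  rcases lt_or_ge j n with h | h
  · rw [List.getElem_append_left (by simpa using h), getElem_ofInt]
  · rw [List.getElem_append_right (by simpa using h), getElem_ofInt]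
    simp only [length_ofInt]
    congr 1
    omega

lemma occursIn_ofInt (x : ℤ → A) (a : ℤ) (n : ℕ) : occursIn (ofInt x a n) x :=
  occursIn_iff.mpr ⟨a, fun j hj => getElem_ofInt x a n j hj⟩

lemma ofInt_mem_language {X : Set (ℤ → A)} {x : ℤ → A} (hx : x ∈ X) (a : ℤ) (n : ℕ) :
    ofInt x a n ∈ language X := ⟨x, hx, occursIn_ofInt x a n⟩

lemma applyWord_prefix (σ : A → List B) {l₁ l₂ : List A} (h : l₁ <+: l₂) :
    applyWord σ l₁ <+: applyWord σ l₂ := by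
  obtain ⟨t, rfl⟩ := h
  rw [applyWord_append]
  exact List.prefix_append _ _

lemma applyWord_suffix (σ : A → List B) {l₁ l₂ : List A} (h : l₁ <:+ l₂) :
    applyWord σ l₁ <:+ applyWord σ l₂ := by
  obtain ⟨t, rfl⟩ := h
  rw [applyWord_append]
  exact List.suffix_append _ _

lemma getElem_of_suffix {l₁ l₂ : List B} (h : l₁ <:+ l₂) {j i : ℕ} (hj : j < l₁.length)
    (hi : i < l₂.length) (hij : i + l₁.length = j + l₂.length) : l₂[i] = l₁[j] := by
  obtain ⟨t, rfl⟩ := h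
  rw [List.length_append] at hij hi
  have hie : i = t.length + j := by omega
  subst hie
  rw [List.getElem_append_right (by omega)]
  congr 1
  omega

lemma applyPoint_nonneg [Nonempty B] (σ : A → List B) (hne : ∀ a, σ a ≠ [])
    (x : ℤ → A) (m : ℤ) (hm : 0 ≤ m) (n : ℕ) (hn : m.toNat + 1 ≤ n)
    (hb : m.toNat < (applyWord σ (ofInt x 0 n)).length) :
    applyPoint σ x m = (applyWord σ (ofInt x 0 n))[m.toNat] := by
  have hofn : List.ofFn (fun k : Fin (m.toNat + 1) => x (k.val : ℤ)) = ofInt x 0 (m.toNat + 1) := by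
    simp [ofInt]
  have hsmall : m.toNat < (applyWord σ (ofInt x 0 (m.toNat + 1))).length := by
    have := length_le_applyWord σ hne (ofInt x 0 (m.toNat + 1))
    simp only [length_ofInt] at this
    omega
  have hpre : applyWord σ (ofInt x 0 (m.toNat + 1)) <+: applyWord σ (ofInt x 0 n) := by
    apply applyWord_prefix
    refine ⟨ofInt x (0 + (m.toNat + 1 : ℕ)) (n - (m.toNat + 1)), ?_⟩
    rw [← ofInt_append]
    congr 1
    omega
  rw [show applyPoint σ x m =
      (applyWord σ (List.ofFn (fun k : Fin (m.toNat + 1) => x (k.val : ℤ)))).getD m.toNat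
        (Classical.inhabited_of_nonempty (inferInstance : Nonempty B)).default from by
    simp only [applyPoint]; rw [if_pos hm]]
  rw [hofn, List.getD_eq_getElem _ _ hsmall]
  exact hpre.getElem hsmall

lemma applyPoint_neg [Nonempty B] (σ : A → List B) (hne : ∀ a, σ a ≠ [])
    (x : ℤ → A) (m : ℤ) (hm : m < 0) (n : ℕ) (hn : (-m).toNat ≤ n)
    (hb : (((applyWord σ (ofInt x (-(n:ℤ)) n)).length : ℤ) + m).toNat <
      (applyWord σ (ofInt x (-(n:ℤ)) n)).length) :
    applyPoint σ x m =
      (applyWord σ (ofInt x (-(n:ℤ)) n))[(((applyWord σ (ofInt x (-(n:ℤ)) n)).length : ℤ) + m).toNat] := by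
  set K := (-m).toNat with hK
  have hofn : List.ofFn (fun k : Fin K => x ((k.val : ℤ) - (K : ℤ))) = ofInt x (-(K:ℤ)) K := by
    simp [ofInt, sub_eq_neg_add]
  have hLlen : K ≤ (applyWord σ (ofInt x (-(K:ℤ)) K)).length := by
    have := length_le_applyWord σ hne (ofInt x (-(K:ℤ)) K)
    simpa using this
  set L := applyWord σ (ofInt x (-(K:ℤ)) K) with hL
  have hidx : ((L.length : ℤ) + m).toNat < L.length := by omega
  have hsuf : L <:+ applyWord σ (ofInt x (-(n:ℤ)) n) := by
    apply applyWord_suffix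
    refine ⟨ofInt x (-(n:ℤ)) (n - K), ?_⟩
    rw [show (-(K:ℤ)) = -(n:ℤ) + (n - K : ℕ) from by push_cast; omega, ← ofInt_append]
    congr 1
    omega
  have hWL : L.length ≤ (applyWord σ (ofInt x (-(n:ℤ)) n)).length := hsuf.length_le
  rw [show applyPoint σ x m =
      (applyWord σ (List.ofFn (fun k : Fin K => x ((k.val : ℤ) - (K : ℤ))))).getD
        (((applyWord σ (List.ofFn (fun k : Fin K => x ((k.val : ℤ) - (K : ℤ))))).length : ℤ) + m).toNat
        (Classical.inhabited_of_nonempty (inferInstance : Nonempty B)).default from by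
    simp only [applyPoint]; rw [if_neg (not_le.mpr hm)]]
  rw [hofn, ← hL, List.getD_eq_getElem _ _ hidx]
  exact (getElem_of_suffix hsuf hidx hb (by omega)).symm

end Part2

section Part3
variable {A B : Type*}

lemma getElem_idx_congr {l : List B} {i j : ℕ} (h : i = j) (hi : i < l.length) :
    l[i]'hi = l[j]'(h ▸ hi) := by subst h; rfl

lemma applyPoint_master [Nonempty B] (σ : A → List B) (hne : ∀ a, σ a ≠ [])
    (x : ℤ → A) (N : ℕ) (m : ℤ) (h1 : -(N:ℤ) ≤ m) (h2 : m < N) :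
    ∃ hb : (((applyWord σ (ofInt x (-(N:ℤ)) N)).length : ℤ) + m).toNat <
        (applyWord σ (ofInt x (-(N:ℤ)) (2*N+1))).length,
      applyPoint σ x m =
        (applyWord σ (ofInt x (-(N:ℤ)) (2*N+1)))[(((applyWord σ (ofInt x (-(N:ℤ)) N)).length : ℤ) + m).toNat]'hb := by
  have hEq : ofInt x (-(N:ℤ)) (2*N+1) = ofInt x (-(N:ℤ)) N ++ ofInt x 0 (N+1) := by
    rw [show 2*N+1 = N + (N+1) from by ring, ofInt_append]
    simp
  have hWsplit : applyWord σ (ofInt x (-(N:ℤ)) (2*N+1)) =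
      applyWord σ (ofInt x (-(N:ℤ)) N) ++ applyWord σ (ofInt x 0 (N+1)) := by
    rw [hEq, applyWord_append]
  have hW : (applyWord σ (ofInt x (-(N:ℤ)) (2*N+1))).length =
      (applyWord σ (ofInt x (-(N:ℤ)) N)).length + (applyWord σ (ofInt x 0 (N+1))).length := by
    rw [hWsplit, List.length_append]
  have hPmlen : N ≤ (applyWord σ (ofInt x (-(N:ℤ)) N)).length := by
    simpa using length_le_applyWord σ hne (ofInt x (-(N:ℤ)) N)
  have hPplen : N + 1 ≤ (applyWord σ (ofInt x 0 (N+1))).length := by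
    simpa using length_le_applyWord σ hne (ofInt x 0 (N+1))
  rcases le_or_gt 0 m with hm | hm
  · have hb : (((applyWord σ (ofInt x (-(N:ℤ)) N)).length : ℤ) + m).toNat <
        (applyWord σ (ofInt x (-(N:ℤ)) (2*N+1))).length := by omega
    refine ⟨hb, ?_⟩
    have hbp : m.toNat < (applyWord σ (ofInt x 0 (N+1))).length := by omega
    rw [applyPoint_nonneg σ hne x m hm (N+1) (by omega) hbp]
    rw [List.getElem_of_eq hWsplit hb]
    rw [List.getElem_append_right (by omega)]
    exact getElem_idx_congr (by omega) hbp
  · have hb : (((applyWord σ (ofInt x (-(N:ℤ)) N)).length : ℤ) + m).toNat <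
        (applyWord σ (ofInt x (-(N:ℤ)) (2*N+1))).length := by omega
    refine ⟨hb, ?_⟩
    have hbL : (((applyWord σ (ofInt x (-(N:ℤ)) N)).length : ℤ) + m).toNat <
        (applyWord σ (ofInt x (-(N:ℤ)) N)).length := by omega
    rw [applyPoint_neg σ hne x m hm N (by omega) hbL]
    rw [List.getElem_of_eq hWsplit hb, List.getElem_append_left hbL]

lemma factor_of_image [Nonempty B] {X : Set (ℤ → A)} (σ : A → List B)
    (hne : ∀ a, σ a ≠ []) {w : List B} (hw : w ∈ language (shiftImage σ X)) :
    ∃ z ∈ language X, w <:+: applyWord σ z := by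
  obtain ⟨y, hy, ho⟩ := hw
  obtain ⟨x, hx, k, hk, rfl⟩ := hy
  rw [occursIn_iff] at ho
  obtain ⟨i, hi⟩ := ho
  by_cases hw0 : w = []
  · subst hw0
    exact ⟨[], ⟨x, hx, occursIn_iff.mpr ⟨0, by simp⟩⟩, List.nil_infix⟩
  set m₀ : ℤ := i + k with hm₀
  set N : ℕ := m₀.natAbs + w.length + 1 with hN
  refine ⟨ofInt x (-(N:ℤ)) (2*N+1), ofInt_mem_language hx _ _, ?_⟩
  have hwne : 0 < w.length := List.length_pos_iff.mpr hw0
  have hDN : N ≤ (applyWord σ (ofInt x (-(N:ℤ)) N)).length := by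
    simpa using length_le_applyWord σ hne (ofInt x (-(N:ℤ)) N)
  have hm₀N : m₀.natAbs ≤ N := by omega
  have key : ∀ j : ℕ, (hjw : j < w.length) →
      ∃ hj : (((applyWord σ (ofInt x (-(N:ℤ)) N)).length : ℤ) + m₀).toNat + j <
          (applyWord σ (ofInt x (-(N:ℤ)) (2*N+1))).length,
        w[j]'hjw =
          (applyWord σ (ofInt x (-(N:ℤ))
            (2*N+1)))[(((applyWord σ (ofInt x (-(N:ℤ)) N)).length : ℤ) + m₀).toNat + j]'hj := by
    intro j hjw
    have hr1 : -(N:ℤ) ≤ m₀ + j := by omega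
    have hr2 : m₀ + j < N := by omega
    obtain ⟨hb, he⟩ := applyPoint_master σ hne x N (m₀ + j) hr1 hr2
    refine ⟨by omega, ?_⟩
    have hiw := hi j hjw
    rw [shiftMap_iterate, show i + (j:ℤ) + k = m₀ + j from by rw [hm₀]; ring, he] at hiw
    rw [hiw]
    exact getElem_idx_congr (by omega) hb
  obtain ⟨hlenlast, -⟩ := key (w.length - 1) (by omega)
  have hlen : (((applyWord σ (ofInt x (-(N:ℤ)) N)).length : ℤ) + m₀).toNat + w.length ≤
      (applyWord σ (ofInt x (-(N:ℤ)) (2*N+1))).length := by omega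
  have hweq : w = List.take w.length (List.drop ((((applyWord σ (ofInt x (-(N:ℤ)) N)).length : ℤ) + m₀).toNat)
      (applyWord σ (ofInt x (-(N:ℤ)) (2*N+1)))) := by
    refine List.ext_getElem (by simp; omega) fun j hj1 hj2 => ?_
    rw [List.getElem_take, List.getElem_drop]
    obtain ⟨hb, he⟩ := key j hj1
    exact he
  have hpre : w <+: List.drop ((((applyWord σ (ofInt x (-(N:ℤ)) N)).length : ℤ) + m₀).toNat)
      (applyWord σ (ofInt x (-(N:ℤ)) (2*N+1))) := by
    rw [hweq]
    exact List.take_prefix _ _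
  exact hpre.isInfix.trans (List.drop_suffix _ _).isInfix

lemma image_mem_language [Nonempty B] {X : Set (ℤ → A)} (hX : IsShiftSpace X)
    (σ : A → List B) (hne : ∀ a, σ a ≠ []) {z : List A} (hz : z ∈ language X) :
    applyWord σ z ∈ language (shiftImage σ X) := by
  obtain ⟨x, hx, ho⟩ := hz
  rw [occursIn_iff] at ho
  obtain ⟨i, hi⟩ := ho
  obtain ⟨x', hx', hx'e⟩ := shift_exists hX hx i
  have hzo : z = ofInt x' 0 z.length := by
    refine List.ext_getElem (by simp) fun j hj1 hj2 => ?_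
    rw [getElem_ofInt, hx'e, hi j hj1]
    congr 1
    omega
  refine ⟨applyPoint σ x', ⟨x', hx', 0, List.length_pos_iff.mpr (hne _), by simp⟩, ?_⟩
  rw [occursIn_iff]
  refine ⟨0, fun j hj => ?_⟩
  have hsub : z <+: ofInt x' 0 (z.length + (j + 1)) := by
    conv_lhs => rw [hzo]
    rw [ofInt_append x' 0 z.length (j+1)]
    exact List.prefix_append _ _
  have hj' : j < (applyWord σ (ofInt x' 0 (z.length + (j + 1)))).length :=
    lt_of_lt_of_le hj (applyWord_prefix σ hsub).length_le
  have hjj : ((j:ℤ)).toNat = j := Int.toNat_natCast j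
  have hjt : ((j:ℤ)).toNat < (applyWord σ (ofInt x' 0 (z.length + (j + 1)))).length := by
    rw [hjj]; exact hj'
  have he := applyPoint_nonneg σ hne x' (j : ℤ) (by positivity) (z.length + (j + 1)) (by omega) hjt
  calc (applyWord σ z)[j]'hj
      = (applyWord σ (ofInt x' 0 (z.length + (j + 1))))[j]'hj' := (applyWord_prefix σ hsub).getElem hj
    _ = (applyWord σ (ofInt x' 0 (z.length + (j + 1))))[((j:ℤ)).toNat]'hjt :=
        getElem_idx_congr hjj.symm hj'
    _ = applyPoint σ x' ((j:ℤ)) := he.symm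
    _ = applyPoint σ x' (0 + (j:ℤ)) := by norm_num

end Part3

section Part4
variable {A B : Type*}

lemma sync {σ : A → List B} {ℓ : B} (hslp : StronglyLeftProper σ ℓ) :
    ∀ (z : List A) (α γ : List B), applyWord σ z = α ++ ℓ :: γ →
      ∃ z₁ z₂, z = z₁ ++ z₂ ∧ z₂ ≠ [] ∧ applyWord σ z₁ = α ∧ applyWord σ z₂ = ℓ :: γ := by
  intro z
  induction z with
  | nil =>
    intro α γ h
    rw [applyWord_nil] at h
    exact absurd h.symm (by simp)
  | cons a z ih =>
    intro α γ h
    obtain ⟨t, ht, hℓt⟩ := hslp a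
    rw [applyWord_cons, ht] at h
    cases α with
    | nil =>
      refine ⟨[], a :: z, rfl, by simp, rfl, ?_⟩
      rw [applyWord_cons, ht]
      simpa using h
    | cons b α' =>
      rw [List.cons_append, List.cons_append] at h
      injection h with hb h'
      subst hb
      rcases List.append_eq_append_iff.mp h' with ⟨a', ha1, ha2⟩ | ⟨c', hc1, hc2⟩
      · obtain ⟨z₁, z₂, rfl, hz₂, hA, hB⟩ := ih a' γ ha2
        refine ⟨a :: z₁, z₂, rfl, hz₂, ?_, hB⟩
        rw [applyWord_cons, ht, hA, ha1]
        simp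
      · cases c' with
        | nil =>
          simp only [List.append_nil] at hc1
          simp only [List.nil_append] at hc2
          have hzne : z ≠ [] := by
            rintro rfl
            rw [applyWord_nil] at hc2
            exact absurd hc2 (by simp)
          refine ⟨[a], z, rfl, hzne, ?_, hc2.symm⟩
          rw [applyWord_singleton, ht, hc1]
        | cons e c'' =>
          exfalso
          rw [List.cons_append] at hc2
          injection hc2 with he _
          apply hℓt
          rw [hc1, ← he]
          simp

lemma last_block {σ : A → List B} {ℓ : B} (hslp : StronglyLeftProper σ ℓ)
    {z : List A} {α s : List B} {c : B} (hs : ℓ ∉ s)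
    (h : applyWord σ z = α ++ c :: s) :
    ∃ z' a₀, z = z' ++ [a₀] ∧ (c :: s) <:+ σ a₀ := by
  have hzne : z ≠ [] := by
    rintro rfl
    rw [applyWord_nil] at h
    exact absurd h.symm (by simp)
  obtain ⟨z', a₀, hzc⟩ := (List.eq_nil_or_concat z).resolve_left hzne
  rw [List.concat_eq_append] at hzc
  subst hzc
  refine ⟨z', a₀, rfl, ?_⟩
  rw [applyWord_append, applyWord_singleton] at h
  have h1 : (c :: s) <:+ (α ++ c :: s) := List.suffix_append _ _
  have h2 : σ a₀ <:+ (α ++ c :: s) := h ▸ List.suffix_append _ _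
  rcases List.suffix_or_suffix_of_suffix h1 h2 with hcs | hsa
  · exact hcs
  · obtain ⟨t', ht'⟩ := hsa
    cases t' with
    | nil =>
      simp only [List.nil_append] at ht'
      rw [ht']
    | cons e t'' =>
      exfalso
      obtain ⟨w₀, hw₀, -⟩ := hslp a₀
      apply hs
      rw [List.cons_append] at ht'
      injection ht' with _ h2'
      rw [← h2', hw₀]
      simp

lemma core_lemma {σ : A → List B} {ℓ : B} (hinj : Function.Injective (applyWord σ))
    (hslp : StronglyLeftProper σ ℓ) {z v : List A} {s p : List B} {a b : A} {c d : B}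
    (hs : s <:+ σ a) (hs' : s ≠ σ a) (hp : p ≠ []) (hp' : p <+: σ b)
    (hinf : c :: (s ++ applyWord σ v ++ p ++ [d]) <:+: applyWord σ z) :
    ∃ a₀ b₀, (a₀ :: (v ++ [b₀])) <:+: z ∧ (c :: s) <:+ σ a₀ ∧
      (p ++ [d]) <+: σ b₀ ++ [ℓ] := by
  obtain ⟨ta, hta, hℓa⟩ := hslp a
  have hℓs : ℓ ∉ s := by
    obtain ⟨q, hq⟩ := hs
    intro hmem
    cases q with
    | nil => exact hs' (by simpa using hq)
    | cons e q' =>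
      apply hℓa
      rw [hta, List.cons_append] at hq
      injection hq with _ h2
      rw [← h2]
      simp [hmem]
  obtain ⟨tb, htb, hℓb⟩ := hslp b
  obtain ⟨p', rfl⟩ : ∃ p', p = ℓ :: p' := by
    cases p with
    | nil => exact absurd rfl hp
    | cons e p'' =>
      obtain ⟨r, hr⟩ := hp'
      rw [htb, List.cons_append] at hr
      injection hr with he _
      exact ⟨p'', by rw [he]⟩
  have hℓp' : ℓ ∉ p' := by
    obtain ⟨r, hr⟩ := hp'
    rw [htb, List.cons_append] at hr
    injection hr with _ h2
    intro hmem
    apply hℓb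
    rw [← h2]
    simp [hmem]
  obtain ⟨α, β, hαβ⟩ := hinf
  have hz1 : applyWord σ z = (α ++ (c :: s ++ applyWord σ v)) ++ ℓ :: (p' ++ d :: β) := by
    rw [← hαβ]
    simp [List.append_assoc]
  obtain ⟨z₁, z₂, rfl, hz₂ne, hσz₁, hσz₂⟩ := sync hslp z _ _ hz1
  obtain ⟨b₀, z₃, rfl⟩ := List.exists_cons_of_ne_nil hz₂ne
  obtain ⟨t₀, ht₀, hℓ₀⟩ := hslp b₀
  rw [applyWord_cons, ht₀, List.cons_append] at hσz₂
  injection hσz₂ with _ hmain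
  have hz₃head : z₃ ≠ [] → ∃ tt, applyWord σ z₃ = ℓ :: tt := applyWord_head hslp
  have hright : ((ℓ :: p') ++ [d]) <+: σ b₀ ++ [ℓ] := by
    rcases List.append_eq_append_iff.mp hmain with ⟨a', hL1, hL2⟩ | ⟨c', hR1, hR2⟩
    · cases a' with
      | nil =>
        simp only [List.append_nil] at hL1
        simp only [List.nil_append] at hL2
        have hz₃ne : z₃ ≠ [] := by
          rintro rfl
          rw [applyWord_nil] at hL2
          exact absurd hL2.symm (by simp)
        obtain ⟨tt, htt⟩ := hz₃head hz₃ne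
        rw [htt] at hL2
        injection hL2.symm with hd _
        rw [ht₀, ← hL1, ← hd]
      | cons e a'' =>
        exfalso
        have hz₃ne : z₃ ≠ [] := by
          rintro rfl
          rw [applyWord_nil] at hL2
          exact absurd hL2.symm (by simp)
        obtain ⟨tt, htt⟩ := hz₃head hz₃ne
        rw [htt, List.cons_append] at hL2
        injection hL2 with he _
        apply hℓp'
        rw [hL1, he]
        simp
    · cases c' with
      | nil =>
        simp only [List.append_nil] at hR1
        simp only [List.nil_append] at hR2
        have hz₃ne : z₃ ≠ [] := by
          rintro rfl
          rw [applyWord_nil] at hR2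
          exact absurd hR2 (by simp)
        obtain ⟨tt, htt⟩ := hz₃head hz₃ne
        rw [htt] at hR2
        injection hR2 with hd _
        rw [ht₀, hR1, hd]
      | cons e c'' =>
        rw [List.cons_append] at hR2
        injection hR2 with hd _
        refine List.IsPrefix.trans ?_ (List.prefix_append (σ b₀) [ℓ])
        refine ⟨c'', ?_⟩
        rw [ht₀, hR1, hd]
        simp
  have hleft : ∃ z₄, z₁ = z₄ ++ v ∧ applyWord σ z₄ = α ++ c :: s := by
    cases v with
    | nil => exact ⟨z₁, by simp, by simpa [applyWord_nil] using hσz₁⟩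
    | cons v₀ v' =>
      obtain ⟨tv, htv, -⟩ := hslp v₀
      have hσv : applyWord σ (v₀ :: v') = ℓ :: (tv ++ applyWord σ v') := by
        rw [applyWord_cons, htv, List.cons_append]
      have hstep : applyWord σ z₁ = (α ++ c :: s) ++ ℓ :: (tv ++ applyWord σ v') := by
        rw [hσz₁, hσv]
        simp [List.append_assoc]
      obtain ⟨z₄, z₅, rfl, hz₅ne, hA, hB⟩ := sync hslp z₁ _ _ hstep
      have hz₅v : z₅ = v₀ :: v' := hinj (by rw [hB, hσv])
      exact ⟨z₄, by rw [hz₅v], hA⟩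
  obtain ⟨z₄, rfl, hσz₄⟩ := hleft
  obtain ⟨z₆, a₀, rfl, hcs⟩ := last_block hslp hℓs hσz₄
  refine ⟨a₀, b₀, ⟨z₆, z₃, ?_⟩, hcs, hright⟩
  simp [List.append_assoc]

end Part4

/-- Proposition 3.3, the extensions of `u` are governed by those of
its antecedent `v`. -/
theorem statement_3 {A B : Type*} [Fintype A] [Fintype B] [Nonempty B]
    (X : Set (ℤ → A)) (hX : IsShiftSpace X)
    (σ : A → List B) (ℓ : B)
    (hinj : Function.Injective (applyWord σ)) (hslp : StronglyLeftProper σ ℓ)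
    (u : List B) (hu : u ∈ language (shiftImage σ X)) (hune : u ≠ []) (hl : ℓ ∈ u)
    (s p : List B) (v : List A) (a b : A)
    (hv : v ∈ language X) (hdec : u = s ++ applyWord σ v ++ p)
    (hab : (a, b) ∈ extBoth X v)
    (hs : s <:+ σ a) (hs' : s ≠ σ a) (hp : p ≠ []) (hp' : p <+: σ b) :
    extBoth (shiftImage σ X) u =
      {q : B × B | ∃ a₀ b₀ : A, (a₀, b₀) ∈ extBoth X v ∧
        (q.1 :: s) <:+ σ a₀ ∧ (p ++ [q.2]) <+: (σ b₀ ++ [ℓ])} := by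
  have hne : ∀ a', σ a' ≠ [] := slp_ne_nil hslp
  ext q
  obtain ⟨c, d⟩ := q
  constructor
  · intro h
    have h' : c :: (u ++ [d]) ∈ language (shiftImage σ X) := h
    obtain ⟨z, hz, hinf⟩ := factor_of_image σ hne h'
    have heq : c :: (u ++ [d]) = c :: (s ++ applyWord σ v ++ (p ++ [d])) := by
      rw [hdec]
      simp [List.append_assoc]
    rw [heq] at hinf
    have hinf' : c :: (s ++ applyWord σ v ++ p ++ [d]) <:+: applyWord σ z := by
      have : c :: (s ++ applyWord σ v ++ p ++ [d]) =
          c :: (s ++ applyWord σ v ++ (p ++ [d])) := by simp [List.append_assoc]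
      rw [this]
      exact hinf
    obtain ⟨a₀, b₀, hinfz, h1, h2⟩ := core_lemma hinj hslp hs hs' hp hp' hinf'
    exact ⟨a₀, b₀, language_infix hz hinfz, h1, h2⟩
  · rintro ⟨a₀, b₀, hmem, h1, h2⟩
    have hvz : a₀ :: (v ++ [b₀]) ∈ language X := hmem
    obtain ⟨b₁, hb₁⟩ := language_ext_right hvz
    have himg := image_mem_language hX σ hne hb₁
    show c :: (u ++ [d]) ∈ language (shiftImage σ X)
    refine language_infix himg ?_
    obtain ⟨t, ht⟩ := h1
    obtain ⟨t₁, ht₁, -⟩ := hslp b₁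
    have h2' : (p ++ [d]) <+: σ b₀ ++ σ b₁ :=
      h2.trans ⟨t₁, by rw [ht₁]; simp⟩
    obtain ⟨r, hr⟩ := h2'
    refine ⟨t, r, ?_⟩
    rw [hdec]
    have hr' : σ b₀ ++ σ b₁ = p ++ (d :: r) := by rw [← hr]; simp
    simp only [applyWord_append, applyWord_cons, applyWord_nil, List.append_nil,
      List.append_assoc]
    rw [hr', ← ht]
    simp [List.append_assoc]
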